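/- For any X = (y,U,ν,r) ∈ F with h = ∫₀¹ ν(η) dη, the function f defined by f(ξ) = (1/(1+h))(y(ξ) + ∫₀^ξ ν(η) dη) belongs to the relabeling group G, and the relabeled element X • f^{−1} belongs to F₀, i.e., it satisfies y_ξ + ν = 1 + h almost everywhere. -/

import Mathlib

open MeasureTheory Real Set Filter Function

noncomputable section

/-- Lagrangian variables for the periodic 2CH system: `y` is the characteristic,
`U` the Lagrangian velocity, `ν` the Lagrangian energy density, `r` the Lagrangian
density; `yξ` and `Uξ` are the spatial (ξ) derivatives of `y` and `U`. -/
structure LagVar where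
  y : ℝ → ℝ
  U : ℝ → ℝ
  ν : ℝ → ℝ
  r : ℝ → ℝ
  yξ : ℝ → ℝ
  Uξ : ℝ → ℝ

/-- The `L^∞([0,1])` norm. -/
def supNorm01 (f : ℝ → ℝ) : ℝ := sSup ((fun x => |f x|) '' Set.Icc (0:ℝ) 1)

/-- The `L^1([0,1])` norm. -/
def L1norm01 (f : ℝ → ℝ) : ℝ := ∫ x in (0:ℝ)..1, |f x|

/-- The `W^{1,1}_per` norm of a function `f` with (a.e.) derivative `f'`. -/
def W11norm (f f' : ℝ → ℝ) : ℝ := supNorm01 f + L1norm01 f'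

/-- The `W^{1,1}_per` norm, using `deriv`. -/
def W11normD (f : ℝ → ℝ) : ℝ := supNorm01 f + L1norm01 (deriv f)

/-- Membership in the Banach space `E`: `y − id`, `U` belong to `W^{1,1}_per`
(absolutely continuous with the given derivatives `yξ`, `Uξ`) and `ν`, `r ∈ L^1_per`. -/
def InE (X : LagVar) : Prop :=
  Continuous X.y ∧ Continuous X.U ∧
  (∀ ξ, X.y (ξ + 1) = X.y ξ + 1) ∧
  (∀ ξ, X.U (ξ + 1) = X.U ξ) ∧ (∀ ξ, X.ν (ξ + 1) = X.ν ξ) ∧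
  (∀ ξ, X.r (ξ + 1) = X.r ξ) ∧ (∀ ξ, X.yξ (ξ + 1) = X.yξ ξ) ∧
  (∀ ξ, X.Uξ (ξ + 1) = X.Uξ ξ) ∧
  (∀ a b : ℝ, X.y b - X.y a = ∫ ξ in a..b, X.yξ ξ) ∧
  (∀ a b : ℝ, X.U b - X.U a = ∫ ξ in a..b, X.Uξ ξ) ∧
  IntervalIntegrable X.yξ volume 0 1 ∧ IntervalIntegrable X.Uξ volume 0 1 ∧
  IntervalIntegrable X.ν volume 0 1 ∧ IntervalIntegrable X.r volume 0 1

/-- The `E`-norm of the difference of two elements of `E`: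
`‖X − X'‖_E = ‖y − y'‖_{W^{1,1}_per} + ‖U − U'‖_{W^{1,1}_per} + ‖ν − ν'‖_{L^1_per} + ‖r − r'‖_{L^1_per}`. -/
def Edist (X X' : LagVar) : ℝ :=
  W11norm (fun ξ => X.y ξ - X'.y ξ) (fun ξ => X.yξ ξ - X'.yξ ξ)
    + W11norm (fun ξ => X.U ξ - X'.U ξ) (fun ξ => X.Uξ ξ - X'.Uξ ξ)
    + L1norm01 (fun ξ => X.ν ξ - X'.ν ξ)
    + L1norm01 (fun ξ => X.r ξ - X'.r ξ)

/-- The bounded set `B_M ⊂ E`. -/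
def InBM (M : ℝ) (X : LagVar) : Prop :=
  W11norm X.U X.Uξ + L1norm01 X.yξ + L1norm01 X.ν ≤ M

/-- The map `P` of the Lagrangian 2CH system. -/
def Pmap (X : LagVar) (ξ : ℝ) : ℝ :=
  (1 / (2 * (Real.exp 1 - 1))) *
      ∫ η in (0:ℝ)..1, Real.cosh (X.y ξ - X.y η) * ((X.U η)^2 * X.yξ η + X.ν η)
    + (1/4) * ∫ η in (0:ℝ)..1,
        Real.exp (-(Real.sign (ξ - η)) * (X.y ξ - X.y η)) * ((X.U η)^2 * X.yξ η + X.ν η)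

/-- The map `Q` of the Lagrangian 2CH system. -/
def Qmap (X : LagVar) (ξ : ℝ) : ℝ :=
  (1 / (2 * (Real.exp 1 - 1))) *
      ∫ η in (0:ℝ)..1, Real.sinh (X.y ξ - X.y η) * ((X.U η)^2 * X.yξ η + X.ν η)
    - (1/4) * ∫ η in (0:ℝ)..1,
        Real.sign (ξ - η) * Real.exp (-(Real.sign (ξ - η)) * (X.y ξ - X.y η)) *
          ((X.U η)^2 * X.yξ η + X.ν η)

/-- Membership in the set `F ⊂ E`. -/
def InF (X : LagVar) : Prop :=
  InE X ∧
  (∃ C : ℝ, ∀ᵐ ξ ∂(volume : Measure ℝ),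
      |X.yξ ξ| ≤ C ∧ |X.Uξ ξ| ≤ C ∧ |X.ν ξ| ≤ C ∧ |X.r ξ| ≤ C) ∧
  (∀ᵐ ξ ∂(volume : Measure ℝ), 0 ≤ X.yξ ξ) ∧
  (∀ᵐ ξ ∂(volume : Measure ℝ), 0 ≤ X.ν ξ) ∧
  (∃ c : ℝ, 0 < c ∧ ∀ᵐ ξ ∂(volume : Measure ℝ), c ≤ X.yξ ξ + X.ν ξ) ∧
  (∀ᵐ ξ ∂(volume : Measure ℝ),
      X.yξ ξ * X.ν ξ = (X.yξ ξ)^2 * (X.U ξ)^2 + (X.Uξ ξ)^2 + (X.r ξ)^2)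

/-- `X : ℝ → LagVar` is a (global, for `t ≥ 0`) solution of the Lagrangian 2CH system
`y_t = U`, `U_t = −Q`, `ν_t = −2QUy_ξ + (3U² − 2P)U_ξ`, `r_t = 0`. -/
def IsLagSolution (X : ℝ → LagVar) : Prop :=
  (∀ t, 0 ≤ t → InE (X t)) ∧
  (∀ ξ, ∀ t, 0 ≤ t →
    HasDerivWithinAt (fun s => (X s).y ξ) ((X t).U ξ) (Set.Ici 0) t) ∧
  (∀ ξ, ∀ t, 0 ≤ t →
    HasDerivWithinAt (fun s => (X s).U ξ) (-(Qmap (X t) ξ)) (Set.Ici 0) t) ∧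
  (∀ ξ, ∀ t, 0 ≤ t →
    HasDerivWithinAt (fun s => (X s).ν ξ)
      (-2 * Qmap (X t) ξ * (X t).U ξ * (X t).yξ ξ
        + (3 * ((X t).U ξ)^2 - 2 * Pmap (X t) ξ) * (X t).Uξ ξ) (Set.Ici 0) t) ∧
  (∀ ξ, ∀ t, 0 ≤ t →
    HasDerivWithinAt (fun s => (X s).r ξ) 0 (Set.Ici 0) t)

/-- A relabeling function `f`, together with its inverse and its derivative. -/
structure Relabel where
  f : ℝ → ℝ
  finv : ℝ → ℝ
  fξ : ℝ → ℝ

/-- Membership in the relabeling group `G`. -/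
def InG (g : Relabel) : Prop :=
  Function.LeftInverse g.finv g.f ∧ Function.RightInverse g.finv g.f ∧
  (∀ ξ, g.f (ξ + 1) = g.f ξ + 1) ∧
  (∃ K : NNReal, LipschitzWith K g.f) ∧
  (∃ K : NNReal, LipschitzWith K g.finv) ∧
  (∀ a b : ℝ, g.f b - g.f a = ∫ ξ in a..b, g.fξ ξ)

/-- The action `X • f = (y∘f, U∘f, (ν∘f)f_ξ, (r∘f)f_ξ)` of a relabeling function on `F`. -/
def act (X : LagVar) (g : Relabel) : LagVar where
  y := fun ξ => X.y (g.f ξ)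
  U := fun ξ => X.U (g.f ξ)
  ν := fun ξ => X.ν (g.f ξ) * g.fξ ξ
  r := fun ξ => X.r (g.f ξ) * g.fξ ξ
  yξ := fun ξ => X.yξ (g.f ξ) * g.fξ ξ
  Uξ := fun ξ => X.Uξ (g.f ξ) * g.fξ ξ

/-- The inverse of a relabeling function. -/
def Relabel.inverse (g : Relabel) : Relabel := ⟨g.finv, g.f, deriv g.finv⟩

/-- `F₀ = {X ∈ F : y_ξ + ν = 1 + h a.e.}`, where `h = ∫₀¹ ν`. -/
def InF0 (X : LagVar) : Prop :=
  InF X ∧ ∀ᵐ ξ ∂(volume : Measure ℝ), X.yξ ξ + X.ν ξ = 1 + ∫ η in (0:ℝ)..1, X.ν η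

/-- `H = {X ∈ F₀ : ∫₀¹ y dξ = 0}`. -/
def InH (X : LagVar) : Prop := InF0 X ∧ (∫ ξ in (0:ℝ)..1, X.y ξ) = 0

/-- `H^M = {X ∈ H : h ≤ M}`. -/
def InHM (M : ℝ) (X : LagVar) : Prop := InH X ∧ (∫ ξ in (0:ℝ)..1, X.ν ξ) ≤ M

/-- The relabeling function `f(ξ) = (1/(1+h))(y(ξ) + ∫₀^ξ ν)` associated with `X ∈ F`. -/
def relabelOf (X : LagVar) : Relabel :=
  ⟨fun ξ => (1 / (1 + ∫ η in (0:ℝ)..1, X.ν η)) * (X.y ξ + ∫ η in (0:ℝ)..ξ, X.ν η),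
   Function.invFun
     (fun ξ => (1 / (1 + ∫ η in (0:ℝ)..1, X.ν η)) * (X.y ξ + ∫ η in (0:ℝ)..ξ, X.ν η)),
   deriv (fun ξ => (1 / (1 + ∫ η in (0:ℝ)..1, X.ν η)) * (X.y ξ + ∫ η in (0:ℝ)..ξ, X.ν η))⟩

/-- The projection `Π₁ : F → F₀`, `Π₁(X) = X • f⁻¹`. -/
def Pi1 (X : LagVar) : LagVar := act X (relabelOf X).inverse

/-- The shift `(Π₂ X)(ξ) = X(ξ − a)`. -/
def shiftX (X : LagVar) (a : ℝ) : LagVar :=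
  ⟨fun ξ => X.y (ξ - a), fun ξ => X.U (ξ - a), fun ξ => X.ν (ξ - a), fun ξ => X.r (ξ - a),
   fun ξ => X.yξ (ξ - a), fun ξ => X.Uξ (ξ - a)⟩

/-- The projection `Π = Π₂ ∘ Π₁ : F → H`. -/
def PiMap (X : LagVar) : LagVar := shiftX (Pi1 X) (∫ ξ in (0:ℝ)..1, (Pi1 X).y ξ)

/-- Membership in the set `D` of Eulerian data: `u ∈ H^1_per` (with derivative `ux`),
`ρ ∈ L^2_per`, and `μ` a positive periodic Radon measure with
`μ_ac = (u² + u_x² + ρ²) dx`. -/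
def InD (u ux ρ : ℝ → ℝ) (μ : Measure ℝ) : Prop :=
  Continuous u ∧
  (∀ x, u (x + 1) = u x) ∧ (∀ x, ux (x + 1) = ux x) ∧ (∀ x, ρ (x + 1) = ρ x) ∧
  (∀ a b : ℝ, u b - u a = ∫ x in a..b, ux x) ∧
  IntervalIntegrable (fun x => (ux x)^2) volume 0 1 ∧
  IntervalIntegrable (fun x => (ρ x)^2) volume 0 1 ∧
  IsLocallyFiniteMeasure μ ∧
  μ.map (fun x => x + 1) = μ ∧
  (∃ μs : Measure ℝ, μs.MutuallySingular volume ∧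
    μ = volume.withDensity (fun x => ENNReal.ofReal ((u x)^2 + (ux x)^2 + (ρ x)^2)) + μs)

/-- `F_μ(x) = μ([0,x))` for `x ≥ 0` and `−μ([x,0))` for `x < 0`. -/
def Fmu (μ : Measure ℝ) (x : ℝ) : ℝ :=
  if 0 ≤ x then (μ (Set.Ico 0 x)).toReal else -((μ (Set.Ico x 0)).toReal)

/-- The map `L̃ : D → F` from Eulerian to Lagrangian coordinates. -/
def Ltilde (u ρ : ℝ → ℝ) (μ : Measure ℝ) : LagVar :=
  let h : ℝ := (μ (Set.Ico (0:ℝ) 1)).toReal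
  let y : ℝ → ℝ := fun ξ => sSup {x : ℝ | Fmu μ x + x < (1 + h) * ξ}
  { y := y
    U := fun ξ => u (y ξ)
    ν := fun ξ => (1 + h) - deriv y ξ
    r := fun ξ => ρ (y ξ) * deriv y ξ
    yξ := deriv y
    Uξ := deriv (fun ξ => u (y ξ)) }

/-- The relation `(u,ρ,μ) = M(X)`: `u(x) = U(ξ)` for `x = y(ξ)`, `μ = y_#(ν dξ)` and
`ρ dx = y_#(r dξ)` (so that in particular `y_#(r dξ)` is absolutely continuous). -/
def MRel (X : LagVar) (u ρ : ℝ → ℝ) (μ : Measure ℝ) : Prop :=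
  (∀ ξ, u (X.y ξ) = X.U ξ) ∧
  μ = Measure.map X.y (volume.withDensity fun ξ => ENNReal.ofReal (X.ν ξ)) ∧
  (∀ φ : ℝ → ℝ, Continuous φ → HasCompactSupport φ →
    (∫ x, φ x * ρ x) = ∫ ξ, φ (X.y ξ) * X.r ξ)

/-- `J(X_α,X_β) = inf_{f,g ∈ G} ‖X_α • f − X_β • g‖_E`. -/
def Jfun (Xa Xb : LagVar) : ℝ :=
  sInf {v : ℝ | ∃ f g : Relabel, InG f ∧ InG g ∧ v = Edist (act Xa f) (act Xb g)}

/-- `d(X_α,X_β) = inf Σ J(X_{n−1},X_n)` over finite sequences in `F` joining `X_α` to `X_β`. -/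
def dfun (Xa Xb : LagVar) : ℝ :=
  sInf {v : ℝ | ∃ N : ℕ, 1 ≤ N ∧ ∃ Z : ℕ → LagVar,
    (∀ n, n ≤ N → InF (Z n)) ∧ Z 0 = Xa ∧ Z N = Xb ∧
    v = ∑ n ∈ Finset.range N, Jfun (Z n) (Z (n+1))}

/-- `d_M(X_α,X_β) = inf Σ J(X_{n−1},X_n)` over finite sequences in `H^M` joining `X_α` to `X_β`. -/
def dM (M : ℝ) (Xa Xb : LagVar) : ℝ :=
  sInf {v : ℝ | ∃ N : ℕ, 1 ≤ N ∧ ∃ Z : ℕ → LagVar,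
    (∀ n, n ≤ N → InHM M (Z n)) ∧ Z 0 = Xa ∧ Z N = Xb ∧
    v = ∑ n ∈ Finset.range N, Jfun (Z n) (Z (n+1))}

/-- The metric `d_{D^M}` on Eulerian sets of bounded energy. -/
def dD (M : ℝ) (u ρ : ℝ → ℝ) (μ : Measure ℝ) (u' ρ' : ℝ → ℝ) (μ' : Measure ℝ) : ℝ :=
  dM M (PiMap (Ltilde u ρ μ)) (PiMap (Ltilde u' ρ' μ'))

/-- `D^M = {(u,ρ,μ) ∈ D : μ([0,1)) ≤ M}`. -/
def InDM (Mc : ℝ) (u ux ρ : ℝ → ℝ) (μ : Measure ℝ) : Prop :=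
  InD u ux ρ μ ∧ (μ (Set.Ico (0:ℝ) 1)).toReal ≤ Mc

/-- The support of a measure on `ℝ`. -/
def msupport (μ : Measure ℝ) : Set ℝ :=
  {x : ℝ | ∀ ε : ℝ, 0 < ε → 0 < μ (Set.Ioo (x - ε) (x + ε))}

/-- The Eulerian function `P(t,·)` computed from `u(t,·)` and `μ(t)`. -/
def Peul (u : ℝ → ℝ) (μ : Measure ℝ) (x : ℝ) : ℝ :=
  (1 / (2 * (Real.exp 1 - 1))) * ∫ z in (0:ℝ)..1, Real.cosh (x - z) * (u z)^2
    + (1 / (2 * (Real.exp 1 - 1))) * ∫ z in Set.Ico (0:ℝ) 1, Real.cosh (x - z) ∂μ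
    + (1/4) * ∫ z in (0:ℝ)..1, Real.exp (-|x - z|) * (u z)^2
    + (1/4) * ∫ z in Set.Ico (0:ℝ) 1, Real.exp (-|x - z|) ∂μ

/-- Partial derivative in time. -/
def partialT (u : ℝ → ℝ → ℝ) (t x : ℝ) : ℝ := deriv (fun s => u s x) t

/-- Partial derivative in space. -/
def partialX (u : ℝ → ℝ → ℝ) (t x : ℝ) : ℝ := deriv (fun z => u t z) x

/-- `(u,ρ)` is a classical solution, for `t > 0`, of the 2CH system with parameters `κ, η`. -/
def Is2CH (κ η : ℝ) (u ρ : ℝ → ℝ → ℝ) : Prop :=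
  ∀ t, 0 < t → ∀ x,
    partialT u t x - partialT (partialX (partialX u)) t x + κ * partialX u t x
        + 3 * u t x * partialX u t x
        - 2 * partialX u t x * partialX (partialX u) t x
        - u t x * partialX (partialX (partialX u)) t x
        + η * ρ t x * partialX ρ t x = 0 ∧
    partialT ρ t x + partialX (fun s z => u s z * ρ s z) t x = 0

/-- Spatial periodicity (period 1). -/
def SpacePeriodic (φ : ℝ → ℝ → ℝ) : Prop := ∀ t x, φ t (x + 1) = φ t x

/-- Spatially periodic test functions, smooth and compactly supported in time `[0,∞)`. -/
def TestFn (φ : ℝ → ℝ → ℝ) : Prop :=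
  ContDiff ℝ (⊤ : ℕ∞) (Function.uncurry φ) ∧ SpacePeriodic φ ∧
  ∃ T : ℝ, ∀ t, T ≤ t → ∀ x, φ t x = 0

/-- Test functions as above, vanishing also near `t = 0` (support in `(0,∞)`). -/
def TestFn0 (φ : ℝ → ℝ → ℝ) : Prop :=
  TestFn φ ∧ ∃ ε : ℝ, 0 < ε ∧ ∀ t, t ≤ ε → ∀ x, φ t x = 0

/-- Membership in `W^{p,∞}(a,b)`: for `p = 0` it is `L^∞(a,b)`; for `p = k+1` it is
`C^{k,1}`, i.e. `C^k` with Lipschitz `k`-th derivative. -/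
def MemWpInf (p : ℕ) (f : ℝ → ℝ) (a b : ℝ) : Prop :=
  match p with
  | 0 => ∃ C : ℝ, ∀ᵐ x ∂(volume.restrict (Set.Ioo a b)), |f x| ≤ C
  | (k+1) => ContDiffOn ℝ k f (Set.Ioo a b) ∧
      ∃ K : NNReal, LipschitzOnWith K (iteratedDerivWithin k f (Set.Ioo a b)) (Set.Ioo a b)

/-- `(u,ρ,μ)` is `p`-regular on `(a,b)`: `u ∈ W^{p,∞}(a,b)`, `ρ ∈ W^{p−1,∞}(a,b)` (as an
a.e.-defined function, i.e. some representative of `ρ` belongs to `W^{p−1,∞}(a,b)`),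
and `μ = μ_ac` on `(a,b)`. -/
def pRegular (p : ℕ) (u ρ : ℝ → ℝ) (μ : Measure ℝ) (a b : ℝ) : Prop :=
  MemWpInf p u a b ∧
  (∃ g : ℝ → ℝ, (∀ᵐ x ∂(volume.restrict (Set.Ioo a b)), g x = ρ x) ∧
    MemWpInf (p - 1) g a b) ∧
  (μ.singularPart volume) (Set.Ioo a b) = 0

end
namespace RelabelAux
open Topology

lemma tendsto_slope_seq {g : ℝ → ℝ} {d x : ℝ} (hg : HasDerivAt g d x)
    {u : ℕ → ℝ} (hu : Tendsto u atTop (𝓝 0)) (hne : ∀ n, u n ≠ 0) :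
    Tendsto (fun n => (g (x + u n) - g x) / u n) atTop (𝓝 d) := by
  have h1 : Tendsto (fun n => x + u n) atTop (𝓝[≠] x) := by
    apply tendsto_nhdsWithin_of_tendsto_nhds_of_eventually_within
    · simpa using tendsto_const_nhds.add hu
    · exact Eventually.of_forall fun n => by simp [hne n]
  have h2 := (hasDerivAt_iff_tendsto_slope.1 hg).comp h1
  refine h2.congr fun n => ?_
  simp [Function.comp, slope_def_field]

lemma II_ends {w : ℝ → ℝ} {a b a' b' : ℝ} (h : IntervalIntegrable w volume a b)
    (ha : a = a') (hb : b = b') : IntervalIntegrable w volume a' b' := ha ▸ hb ▸ h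

lemma periodic_intervalIntegrable {w : ℝ → ℝ} (hper : ∀ x, w (x + 1) = w x)
    (h : IntervalIntegrable w volume 0 1) (a b : ℝ) :
    IntervalIntegrable w volume a b := by
  have hsub : ∀ (n : ℕ) (x : ℝ), w (x - n) = w x := by
    intro n
    induction n with
    | zero => intro x; norm_num
    | succ k ih =>
        intro x
        have e1 : x - ((k+1 : ℕ) : ℝ) = (x - 1) - (k : ℕ) := by push_cast; ring
        rw [e1, ih (x-1), ← hper (x-1), show x - 1 + 1 = x by ring]
  have hadd : ∀ (n : ℕ) (x : ℝ), w (x + n) = w x := by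
    intro n x
    have h2 := hsub n (x + n)
    rw [add_sub_cancel_right] at h2
    exact h2.symm
  have stepN : ∀ n : ℕ, IntervalIntegrable w volume n ((n : ℝ)+1) := by
    intro n
    have h2 := h.comp_sub_right (n : ℝ)
    have e : (fun x => w (x - (n:ℝ))) = w := funext fun x => hsub n x
    rw [e] at h2
    exact II_ends h2 (by ring) (by ring)
  have stepNeg : ∀ n : ℕ, IntervalIntegrable w volume (-(n:ℝ)-1) (-(n:ℝ)) := by
    intro n
    have h2 := h.comp_add_right ((n : ℝ)+1)
    have e : (fun x => w (x + ((n:ℝ)+1))) = w := funext fun x => by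
      have h3 := hadd (n+1) x
      push_cast at h3
      exact h3
    rw [e] at h2
    exact II_ends h2 (by ring) (by ring)
  have chainPos : ∀ n : ℕ, IntervalIntegrable w volume 0 ((n:ℝ)+1) := by
    intro n
    induction n with
    | zero => simpa using stepN 0
    | succ k ih =>
        exact ih.trans (II_ends (stepN (k+1)) (by push_cast; ring) (by push_cast; ring))
  have chainNeg : ∀ n : ℕ, IntervalIntegrable w volume (-(n:ℝ)-1) 0 := by
    intro n
    induction n with
    | zero => simpa using stepNeg 0
    | succ k ih =>
        exact (II_ends (stepNeg (k+1)) (by push_cast; ring) (by push_cast; ring)).trans ih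
  obtain ⟨n, hn⟩ := exists_nat_ge (max |a| |b|)
  have full : IntervalIntegrable w volume (-(n:ℝ)-1) ((n:ℝ)+1) :=
    (chainNeg n).trans (chainPos n)
  apply full.mono_set
  have hc : (-(n:ℝ)-1) ≤ ((n:ℝ)+1) := by
    have : (0:ℝ) ≤ (n:ℝ) := n.cast_nonneg
    linarith
  have ha' := abs_le.1 (le_trans (le_max_left |a| |b|) hn)
  have hb' := abs_le.1 (le_trans (le_max_right |a| |b|) hn)
  apply Set.uIcc_subset_uIcc
  · rw [Set.uIcc_of_le hc, Set.mem_Icc]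
    constructor <;> linarith [ha'.1, ha'.2]
  · rw [Set.uIcc_of_le hc, Set.mem_Icc]
    constructor <;> linarith [hb'.1, hb'.2]

lemma locallyIntegrable_of_all {w : ℝ → ℝ}
    (hall : ∀ a b : ℝ, IntervalIntegrable w volume a b) :
    LocallyIntegrable w volume := by
  rw [locallyIntegrable_iff]
  intro K hK
  obtain ⟨r, hr⟩ := hK.isBounded.subset_closedBall 0
  have h1 : IntegrableOn w (Set.uIcc (-(max r 0)) (max r 0)) volume :=
    (intervalIntegrable_iff' (μ := volume)).1 (hall _ _)
  refine h1.mono_set (le_trans hr ?_)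
  rw [Real.closedBall_eq_Icc, Set.uIcc_of_le (by
    have := le_max_right r 0; linarith : (-(max r 0)) ≤ max r 0)]
  apply Set.Icc_subset_Icc
  · have := le_max_left r 0; linarith
  · have := le_max_left r 0; linarith

lemma ae_hasDerivAt_primitive {w : ℝ → ℝ}
    (hall : ∀ a b : ℝ, IntervalIntegrable w volume a b) :
    ∀ᵐ x, HasDerivAt (fun t => ∫ s in (0:ℝ)..t, w s) (w x) x := by
  have hloc := locallyIntegrable_of_all hall
  filter_upwards [(IsUnifLocDoublingMeasure.vitaliFamily (volume : Measure ℝ) 1).ae_tendsto_average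
    hloc] with x hx
  have key : ∀ y : ℝ, (∫ s in (0:ℝ)..y, w s) - ∫ s in (0:ℝ)..x, w s = ∫ s in x..y, w s := by
    intro y
    rw [← intervalIntegral.integral_add_adjacent_intervals (hall 0 x) (hall x y)]
    ring
  have hIcc : ∀ {u v : ℝ}, u < v → ⨍ z in Icc u v, w z = (∫ s in u..v, w s) / (v - u) := by
    intro u v huv
    rw [setAverage_eq, MeasureTheory.integral_Icc_eq_integral_Ioc,
      ← intervalIntegral.integral_of_le huv.le, Real.volume_real_Icc_of_le huv.le, smul_eq_mul, div_eq_inv_mul]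
  have R : Tendsto (slope (fun t => ∫ s in (0:ℝ)..t, w s) x) (𝓝[>] x) (𝓝 (w x)) := by
    apply Tendsto.congr' _ (hx.comp (Real.tendsto_Icc_vitaliFamily_right x))
    filter_upwards [self_mem_nhdsWithin] with y hy
    have hy' : x < y := hy
    rw [Function.comp_apply, hIcc hy', slope_def_field, key y]
  have L : Tendsto (slope (fun t => ∫ s in (0:ℝ)..t, w s) x) (𝓝[<] x) (𝓝 (w x)) := by
    apply Tendsto.congr' _ (hx.comp (Real.tendsto_Icc_vitaliFamily_left x))
    filter_upwards [self_mem_nhdsWithin] with y hy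
    have hy' : y < x := hy
    rw [Function.comp_apply, hIcc hy', slope_def_field, key y]
    rw [intervalIntegral.integral_symm x y, show y - x = -(x-y) by ring, div_neg, neg_div]
  rw [hasDerivAt_iff_tendsto_slope, ← nhdsLT_sup_nhdsGT, tendsto_sup]
  exact ⟨L, R⟩


lemma abs_intervalIntegral_le {w : ℝ → ℝ} {C : ℝ}
    (hall : ∀ a b : ℝ, IntervalIntegrable w volume a b)
    (hbd : ∀ᵐ x, |w x| ≤ C) : ∀ a b : ℝ, |∫ s in a..b, w s| ≤ C * |b - a| := by
  have key : ∀ a b : ℝ, a ≤ b → |∫ s in a..b, w s| ≤ C * (b - a) := by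
    intro a b hab
    calc |∫ s in a..b, w s| ≤ ∫ s in a..b, |w s| :=
        intervalIntegral.abs_integral_le_integral_abs hab
      _ ≤ ∫ _s in a..b, C := intervalIntegral.integral_mono_ae_restrict hab
          (hall a b).abs intervalIntegrable_const (ae_restrict_of_ae hbd)
      _ = C * (b - a) := by simp [mul_comm]
  intro a b
  rcases le_total a b with hab | hab
  · rw [abs_of_nonneg (sub_nonneg.2 hab)]
    exact key a b hab
  · rw [abs_of_nonpos (sub_nonpos.2 hab)]
    have e : |∫ s in a..b, w s| = |∫ s in b..a, w s| := by
      rw [intervalIntegral.integral_symm b a, abs_neg]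
    rw [e]
    have := key b a hab
    linarith
  
lemma intervalIntegrable_of_bdd {w : ℝ → ℝ} {C : ℝ}
    (hm : AEStronglyMeasurable w volume) (hbd : ∀ᵐ x, ‖w x‖ ≤ C) (a b : ℝ) :
    IntervalIntegrable w volume a b := by
  rw [intervalIntegrable_iff]
  exact Integrable.mono' (integrableOn_const measure_Ioc_lt_top.ne)
    hm.restrict (ae_restrict_of_ae hbd)

lemma lipschitz_integral_deriv {ψ : ℝ → ℝ} {K : NNReal} (hψ : LipschitzWith K ψ) (a b : ℝ) :
    ∫ t in a..b, deriv ψ t = ψ b - ψ a := by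
  have hcont : Continuous ψ := hψ.continuous
  set u : ℕ → ℝ := fun n => ((n : ℝ) + 1)⁻¹ with hu
  have hupos : ∀ n, 0 < u n := fun n => by positivity
  have hu0 : Tendsto u atTop (𝓝 0) := by
    have := tendsto_one_div_add_atTop_nhds_zero_nat (𝕜 := ℝ)
    simpa [hu, one_div] using this
  have hInt : ∀ (c d : ℝ), IntervalIntegrable ψ volume c d :=
    fun c d => hcont.intervalIntegrable c d
  have hIntShift : ∀ (n : ℕ) (c d : ℝ), IntervalIntegrable (fun t => ψ (t + u n)) volume c d :=
    fun n c d => (hcont.comp (continuous_add_right _)).intervalIntegrable c d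
  have T2val : ∀ n : ℕ, (∫ t in a..b, (ψ (t + u n) - ψ t) / u n) =
      ((∫ t in b..b + u n, ψ t) - ∫ t in a..a + u n, ψ t) / u n := by
    intro n
    rw [intervalIntegral.integral_div]
    congr 1
    rw [intervalIntegral.integral_sub (hIntShift n a b) (hInt a b),
      intervalIntegral.integral_comp_add_right ψ (u n)]
    have A1 := intervalIntegral.integral_add_adjacent_intervals
      (hInt a (a + u n)) (hInt (a + u n) (b + u n))
    have A2 := intervalIntegral.integral_add_adjacent_intervals (hInt a b) (hInt b (b + u n))
    linarith
  have hc : ∀ c : ℝ, Tendsto (fun n => (∫ t in c..c + u n, ψ t) / u n) atTop (𝓝 (ψ c)) := by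
    intro c
    have hD : HasDerivAt (fun x => ∫ t in c..x, ψ t) (ψ c) c :=
      intervalIntegral.integral_hasDerivAt_right (hInt c c)
        ⟨Set.univ, univ_mem, hcont.aestronglyMeasurable.restrict⟩ hcont.continuousAt
    have h2 := tendsto_slope_seq hD hu0 fun n => (hupos n).ne'
    simpa using h2
  have T2 : Tendsto (fun n => ∫ t in a..b, (ψ (t + u n) - ψ t) / u n) atTop (𝓝 (ψ b - ψ a)) := by
    refine Tendsto.congr (fun n => (T2val n).symm) ?_
    have h3 := (hc b).sub (hc a)
    refine h3.congr fun n => ?_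
    ring
  have T1 : Tendsto (fun n => ∫ t in a..b, (ψ (t + u n) - ψ t) / u n) atTop
      (𝓝 (∫ t in a..b, deriv ψ t)) := by
    apply intervalIntegral.tendsto_integral_filter_of_dominated_convergence (fun _ => (K : ℝ))
    · exact Eventually.of_forall fun n =>
        (((hcont.comp (continuous_add_right _)).sub hcont).div_const _).aestronglyMeasurable.restrict
    · refine Eventually.of_forall fun n => Eventually.of_forall fun x _ => ?_
      rw [Real.norm_eq_abs, abs_div, abs_of_pos (hupos n), div_le_iff₀ (hupos n)]
      calc |ψ (x + u n) - ψ x| ≤ K * |x + u n - x| := by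
            have h4 := hψ.dist_le_mul (x + u n) x
            simpa [Real.dist_eq] using h4
        _ = K * u n := by rw [show x + u n - x = u n by ring, abs_of_pos (hupos n)]
    · exact intervalIntegrable_const
    · filter_upwards [hψ.ae_differentiableAt (μ := volume)] with x hx _
      exact tendsto_slope_seq hx.hasDerivAt hu0 fun n => (hupos n).ne'
  exact tendsto_nhds_unique T1 T2

lemma lip_image_null {f : ℝ → ℝ} {K : NNReal} (hf : LipschitzWith K f)
    {s : Set ℝ} (hs : volume s = 0) : volume (f '' s) = 0 := by
  have h1 := hf.hausdorffMeasure_image_le zero_le_one s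
  rw [MeasureTheory.hausdorffMeasure_real, hs, mul_zero] at h1
  exact le_antisymm (by simpa using h1) zero_le

lemma ae_pull {f φ : ℝ → ℝ} {K : NNReal} (hf : LipschitzWith K f)
    (hinv : ∀ x, f (φ x) = x) {p : ℝ → Prop} (hp : ∀ᵐ x, p x) :
    ∀ᵐ η, p (φ η) := by
  rw [ae_iff] at hp ⊢
  apply measure_mono_null ?_ (lip_image_null hf hp)
  intro η hη
  exact ⟨φ η, hη, hinv η⟩


lemma comp_pack {f φ : ℝ → ℝ} {Kf Kφ : NNReal}
    (hf : LipschitzWith Kf f) (hφ : LipschitzWith Kφ φ)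
    (hinv : ∀ x, f (φ x) = x)
    {w : ℝ → ℝ} (hall : ∀ a b : ℝ, IntervalIntegrable w volume a b)
    {C0 : ℝ} (hbd : ∀ᵐ x, |w x| ≤ C0) :
    (∀ᵐ η, HasDerivAt (fun t => (∫ s in (0:ℝ)..(φ t), w s)) (w (φ η) * deriv φ η) η) ∧
    (∀ a b : ℝ, (∫ η in a..b, w (φ η) * deriv φ η) =
        (∫ s in (0:ℝ)..(φ b), w s) - ∫ s in (0:ℝ)..(φ a), w s) ∧
    (∀ a b : ℝ, IntervalIntegrable (fun η => w (φ η) * deriv φ η) volume a b) := by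
  set C1 : ℝ := max C0 0 with hC1
  have hbd1 : ∀ᵐ x, |w x| ≤ C1 := hbd.mono fun x hx => hx.trans (le_max_left _ _)
  set Φ : ℝ → ℝ := fun t => ∫ s in (0:ℝ)..t, w s with hΦdef
  have hLipΦ : LipschitzWith C1.toNNReal Φ := by
    apply LipschitzWith.of_dist_le_mul
    intro x y
    rw [Real.dist_eq, Real.dist_eq, Real.coe_toNNReal _ (le_max_right C0 0)]
    have e : Φ x - Φ y = ∫ s in y..x, w s := by
      show (∫ s in (0:ℝ)..x, w s) - ∫ s in (0:ℝ)..y, w s = ∫ s in y..x, w s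
      rw [← intervalIntegral.integral_add_adjacent_intervals (hall 0 y) (hall y x)]
      ring
    rw [e]
    exact abs_intervalIntegral_le hall hbd1 y x
  have hae : ∀ᵐ η, HasDerivAt (fun t => Φ (φ t)) (w (φ η) * deriv φ η) η := by
    filter_upwards [ae_pull hf hinv (ae_hasDerivAt_primitive hall),
      hφ.ae_differentiableAt (μ := volume)] with η h1 h2
    exact HasDerivAt.comp η h1 h2.hasDerivAt
  have hder : ∀ᵐ η, deriv (fun t => Φ (φ t)) η = w (φ η) * deriv φ η :=
    hae.mono fun η hη => hη.deriv
  have hLipψ : LipschitzWith (C1.toNNReal * Kφ) (fun t => Φ (φ t)) := hLipΦ.comp hφ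
  refine ⟨hae, fun a b => ?_, fun a b => ?_⟩
  · calc (∫ η in a..b, w (φ η) * deriv φ η)
        = ∫ η in a..b, deriv (fun t => Φ (φ t)) η := by
          apply intervalIntegral.integral_congr_ae
          filter_upwards [hder] with x hx _
          exact hx.symm
      _ = Φ (φ b) - Φ (φ a) := lipschitz_integral_deriv hLipψ a b
  · have hii : IntervalIntegrable (deriv fun t => Φ (φ t)) volume a b :=
      intervalIntegrable_of_bdd ((measurable_deriv _).aestronglyMeasurable)
        (Eventually.of_forall fun x => norm_deriv_le_of_lipschitz hLipψ) a b
    rw [intervalIntegrable_iff] at hii ⊢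
    exact hii.congr (ae_restrict_of_ae hder)


end RelabelAux

open Topology

/-- For `X = (y,U,ν,r) ∈ F` with `h = ∫₀¹ ν dη`, the function
`f(ξ) = (1/(1+h))(y(ξ) + ∫₀^ξ ν(η) dη)` belongs to the relabeling group `G`, and
`X • f⁻¹` belongs to `F₀`, i.e. satisfies `y_ξ + ν = 1 + h` almost everywhere. -/
theorem relabel_to_F0 (X : LagVar) (hX : InF X) :
    ∃ g : Relabel, InG g ∧
      (∀ ξ, g.f ξ =
        (1 / (1 + ∫ η in (0:ℝ)..1, X.ν η)) * (X.y ξ + ∫ η in (0:ℝ)..ξ, X.ν η)) ∧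
      InF0 (act X g.inverse) := by
  obtain ⟨hE, ⟨C, hC⟩, hyξ0, hν0, ⟨c, hcpos, hcle⟩, hconstr⟩ := hX
  obtain ⟨hycont, hUcont, hyper, hUper, hνper, hrper, hyξper, hUξper, hyFTC, hUFTC,
    hyξint, hUξint, hνint, hrint⟩ := hE
  set h : ℝ := ∫ η in (0:ℝ)..1, X.ν η with hh
  have hνall := RelabelAux.periodic_intervalIntegrable hνper hνint
  have hyξall := RelabelAux.periodic_intervalIntegrable hyξper hyξint
  have hUξall := RelabelAux.periodic_intervalIntegrable hUξper hUξint
  have hrall := RelabelAux.periodic_intervalIntegrable hrper hrint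
  have hh0 : 0 ≤ h := intervalIntegral.integral_nonneg_of_ae zero_le_one hν0
  have h1p : (0:ℝ) < 1 + h := by linarith
  set C1 : ℝ := max C 0 with hC1def
  have hC10 : 0 ≤ C1 := le_max_right _ _
  have hC1 : ∀ᵐ ξ ∂(volume : Measure ℝ),
      |X.yξ ξ| ≤ C1 ∧ |X.Uξ ξ| ≤ C1 ∧ |X.ν ξ| ≤ C1 ∧ |X.r ξ| ≤ C1 :=
    hC.mono fun ξ hξ => ⟨hξ.1.trans (le_max_left _ _), hξ.2.1.trans (le_max_left _ _),
      hξ.2.2.1.trans (le_max_left _ _), hξ.2.2.2.trans (le_max_left _ _)⟩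
  set κ : ℝ := c / (1 + h) with hκdef
  have hκpos : 0 < κ := div_pos hcpos h1p
  have hκinv0 : (0:ℝ) ≤ 1/κ := by positivity
  set KR : ℝ := 2 * C1 / (1 + h) with hKRdef
  have hKR0 : 0 ≤ KR := by positivity
  set f : ℝ → ℝ := fun ξ => (1 / (1 + h)) * (X.y ξ + ∫ η in (0:ℝ)..ξ, X.ν η) with hfdef
  set fξ : ℝ → ℝ := fun ξ => (1 / (1 + h)) * (X.yξ ξ + X.ν ξ) with hfξdef
  have hfξall : ∀ a b : ℝ, IntervalIntegrable fξ volume a b := fun a b =>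
    ((hyξall a b).add (hνall a b)).const_mul _
  have hfFTC : ∀ a b : ℝ, f b - f a = ∫ ξ in a..b, fξ ξ := by
    intro a b
    have hN : (∫ η in (0:ℝ)..b, X.ν η) - ∫ η in (0:ℝ)..a, X.ν η = ∫ η in a..b, X.ν η := by
      rw [← intervalIntegral.integral_add_adjacent_intervals (hνall 0 a) (hνall a b)]
      ring
    have hca : (∫ ξ in a..b, fξ ξ) = (1/(1+h)) * ∫ ξ in a..b, (X.yξ ξ + X.ν ξ) :=
      intervalIntegral.integral_const_mul _ _
    rw [hca, intervalIntegral.integral_add (hyξall a b) (hνall a b), ← hyFTC a b, ← hN]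
    show (1/(1+h)) * (X.y b + _) - (1/(1+h)) * (X.y a + _) = _
    ring
  have hfξlow : ∀ᵐ ξ ∂(volume : Measure ℝ), κ ≤ fξ ξ := by
    filter_upwards [hcle] with ξ hξ
    have h2 : (1/(1+h)) * c ≤ (1/(1+h)) * (X.yξ ξ + X.ν ξ) :=
      mul_le_mul_of_nonneg_left hξ (by positivity)
    calc κ = (1/(1+h)) * c := by rw [hκdef]; field_simp
      _ ≤ fξ ξ := h2
  have hfξabs : ∀ᵐ ξ ∂(volume : Measure ℝ), |fξ ξ| ≤ KR := by
    filter_upwards [hC1] with ξ hξ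
    have e : |fξ ξ| = (1/(1+h)) * |X.yξ ξ + X.ν ξ| := by
      show |(1/(1+h)) * (X.yξ ξ + X.ν ξ)| = _
      rw [abs_mul, abs_of_pos (by positivity : (0:ℝ) < 1/(1+h))]
    rw [e]
    have h2 : |X.yξ ξ + X.ν ξ| ≤ 2*C1 := (abs_add_le _ _).trans (by linarith [hξ.1, hξ.2.2.1])
    calc (1/(1+h)) * |X.yξ ξ + X.ν ξ| ≤ (1/(1+h)) * (2*C1) :=
        mul_le_mul_of_nonneg_left h2 (by positivity)
      _ = KR := by rw [hKRdef]; ring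
  have hfξhigh : ∀ᵐ ξ ∂(volume : Measure ℝ), fξ ξ ≤ KR :=
    hfξabs.mono fun ξ hξ => (le_abs_self _).trans hξ
  have hlow : ∀ a b : ℝ, a ≤ b → κ * (b - a) ≤ f b - f a := by
    intro a b hab
    rw [hfFTC a b]
    have h2 := intervalIntegral.integral_mono_ae_restrict hab intervalIntegrable_const
      (hfξall a b) (ae_restrict_of_ae hfξlow)
    have h3 : (∫ _u in a..b, κ) = (b - a) * κ := by
      rw [intervalIntegral.integral_const, smul_eq_mul]
    linarith [h2, h3]
  have hupp : ∀ a b : ℝ, a ≤ b → f b - f a ≤ KR * (b - a) := by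
    intro a b hab
    rw [hfFTC a b]
    have h2 := intervalIntegral.integral_mono_ae_restrict hab (hfξall a b)
      intervalIntegrable_const (ae_restrict_of_ae hfξhigh)
    have h3 : (∫ _u in a..b, KR) = (b - a) * KR := by
      rw [intervalIntegral.integral_const, smul_eq_mul]
    linarith [h2, h3]
  have hmono : StrictMono f := by
    intro a b hab
    have h2 := hlow a b hab.le
    have h3 := mul_pos hκpos (sub_pos.2 hab)
    linarith
  have hLipf : LipschitzWith KR.toNNReal f := by
    apply LipschitzWith.of_dist_le_mul
    intro x y
    rw [Real.dist_eq, Real.dist_eq, Real.coe_toNNReal _ hKR0]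
    have key : ∀ u v : ℝ, u ≤ v → |f u - f v| ≤ KR * |u - v| := by
      intro u v huv
      have h1 := hupp u v huv
      have h2 := hlow u v huv
      have h4 : 0 ≤ f v - f u := le_trans (mul_nonneg hκpos.le (sub_nonneg.2 huv)) h2
      rw [abs_sub_comm, abs_of_nonneg h4, abs_sub_comm, abs_of_nonneg (sub_nonneg.2 huv)]
      linarith
    rcases le_total x y with hxy | hxy
    · exact key x y hxy
    · rw [abs_sub_comm, abs_sub_comm x y]
      exact key y x hxy
  have hcontf : Continuous f := hLipf.continuous
  have hsurj : Function.Surjective f := by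
    apply hcontf.surjective
    · have hg : Tendsto (fun ξ : ℝ => f 0 + κ * ξ) atTop atTop :=
        tendsto_atTop_add_const_left atTop (f 0)
          ((tendsto_const_mul_atTop_of_pos hκpos).2 tendsto_id)
      apply tendsto_atTop_mono' atTop ?_ hg
      filter_upwards [eventually_ge_atTop (0:ℝ)] with ξ hξ
      have h2 := hlow 0 ξ hξ
      show f 0 + κ * ξ ≤ f ξ
      linarith
    · have hg : Tendsto (fun ξ : ℝ => f 0 + κ * ξ) atBot atBot :=
        tendsto_atBot_add_const_left atBot (f 0)
          ((tendsto_const_mul_atBot_of_pos hκpos).2 tendsto_id)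
      apply tendsto_atBot_mono' atBot ?_ hg
      filter_upwards [eventually_le_atBot (0:ℝ)] with ξ hξ
      have h2 := hlow ξ 0 hξ
      show f ξ ≤ f 0 + κ * ξ
      linarith
  have hinj : Function.Injective f := hmono.injective
  set φ : ℝ → ℝ := Function.invFun f with hφdef
  have hrinv : ∀ x, f (φ x) = x := fun x => Function.rightInverse_invFun hsurj x
  have hlinv : ∀ x, φ (f x) = x := fun x => Function.leftInverse_invFun hinj x
  have hLipφ : LipschitzWith (1/κ).toNNReal φ := by
    apply LipschitzWith.of_dist_le_mul
    intro x y
    rw [Real.dist_eq, Real.dist_eq, Real.coe_toNNReal _ hκinv0]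
    have key : ∀ u v : ℝ, φ u ≤ φ v → |φ u - φ v| ≤ (1/κ) * |u - v| := by
      intro u v huv
      have h2 := hlow (φ u) (φ v) huv
      rw [hrinv, hrinv] at h2
      rw [abs_sub_comm, abs_of_nonneg (sub_nonneg.2 huv)]
      have h5 : v - u ≤ |u - v| := by rw [abs_sub_comm]; exact le_abs_self _
      calc φ v - φ u = (1/κ) * (κ * (φ v - φ u)) := by field_simp
        _ ≤ (1/κ) * |u - v| := mul_le_mul_of_nonneg_left (h2.trans h5) hκinv0
    rcases le_total (φ x) (φ y) with hxy | hxy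
    · exact key x y hxy
    · rw [abs_sub_comm, abs_sub_comm x y]
      exact key y x hxy
  have hφmono : Monotone φ := by
    intro x y hxy
    by_contra hlt
    push_neg at hlt
    have h2 := hmono hlt
    rw [hrinv, hrinv] at h2
    linarith
  have hνperiodic : Function.Periodic X.ν 1 := hνper
  have hNadd : ∀ ξ : ℝ, (∫ η in (0:ℝ)..(ξ+1), X.ν η) = (∫ η in (0:ℝ)..ξ, X.ν η) + h := by
    intro ξ
    have h2 := intervalIntegral.integral_add_adjacent_intervals (hνall 0 ξ) (hνall ξ (ξ+1))
    have h3 := hνperiodic.intervalIntegral_add_eq ξ 0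
    rw [zero_add] at h3
    rw [hh]
    linarith
  have hfadd : ∀ ξ, f (ξ + 1) = f ξ + 1 := by
    intro ξ
    show (1/(1+h)) * (X.y (ξ+1) + ∫ η in (0:ℝ)..(ξ+1), X.ν η)
      = (1/(1+h)) * (X.y ξ + ∫ η in (0:ℝ)..ξ, X.ν η) + 1
    rw [hyper ξ, hNadd ξ]
    field_simp
    ring
  have hφadd : ∀ η, φ (η + 1) = φ η + 1 := by
    intro η
    apply hinj
    rw [hrinv, hfadd (φ η), hrinv]
  have hDper : ∀ η, deriv φ (η+1) = deriv φ η := by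
    intro η
    have e : (fun x => φ (x+1)) = fun x => φ x + 1 := funext hφadd
    have h2 : deriv (fun x => φ (x+1)) η = deriv φ (η+1) := deriv_comp_add_const φ 1 η
    rw [e, deriv_add_const] at h2
    exact h2.symm
  have hD0 : ∀ η, 0 ≤ deriv φ η := by
    intro η
    by_cases hd : DifferentiableAt ℝ φ η
    · have h2 : Tendsto (slope φ η) (𝓝[>] η) (𝓝 (deriv φ η)) :=
        (hasDerivAt_iff_tendsto_slope.1 hd.hasDerivAt).mono_left
          (nhdsWithin_mono η fun x hx => Set.mem_compl_singleton_iff.2 (LT.lt.ne' hx))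
      apply ge_of_tendsto h2
      filter_upwards [self_mem_nhdsWithin] with y hy
      have hy' : η < y := hy
      rw [slope_def_field]
      exact div_nonneg (by have := hφmono hy'.le; linarith) (by linarith)
    · rw [deriv_zero_of_not_differentiableAt hd]
  have hDle : ∀ η, |deriv φ η| ≤ 1/κ := by
    intro η
    have h2 := norm_deriv_le_of_lipschitz (f := φ) (x₀ := η) hLipφ
    rwa [Real.norm_eq_abs, Real.coe_toNNReal _ hκinv0] at h2
  have pull : ∀ {p : ℝ → Prop}, (∀ᵐ x ∂(volume : Measure ℝ), p x) →
      ∀ᵐ η ∂(volume : Measure ℝ), p (φ η) :=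
    fun hp => RelabelAux.ae_pull hLipf hrinv hp
  obtain ⟨hfξcomp, hfξint2, hfξii⟩ := RelabelAux.comp_pack hLipf hLipφ hrinv hfξall hfξabs
  have hE3 : ∀ᵐ η ∂(volume : Measure ℝ), fξ (φ η) * deriv φ η = 1 := by
    have e : (fun t => ∫ s in (0:ℝ)..(φ t), fξ s) = fun t => t - f 0 := by
      funext t
      have h2 := hfFTC 0 (φ t)
      rw [hrinv] at h2
      linarith
    filter_upwards [hfξcomp] with η hη
    rw [e] at hη
    exact hη.unique ((hasDerivAt_id η).sub_const _)
  have hybd : ∀ᵐ ξ ∂(volume : Measure ℝ), |X.yξ ξ| ≤ C1 := hC1.mono fun ξ hξ => hξ.1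
  have hUbd : ∀ᵐ ξ ∂(volume : Measure ℝ), |X.Uξ ξ| ≤ C1 := hC1.mono fun ξ hξ => hξ.2.1
  have hνbd : ∀ᵐ ξ ∂(volume : Measure ℝ), |X.ν ξ| ≤ C1 := hC1.mono fun ξ hξ => hξ.2.2.1
  have hrbd : ∀ᵐ ξ ∂(volume : Measure ℝ), |X.r ξ| ≤ C1 := hC1.mono fun ξ hξ => hξ.2.2.2
  obtain ⟨-, hyint2, hyii⟩ := RelabelAux.comp_pack hLipf hLipφ hrinv hyξall hybd
  obtain ⟨-, hUint2, hUii⟩ := RelabelAux.comp_pack hLipf hLipφ hrinv hUξall hUbd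
  obtain ⟨-, hνint2, hνii⟩ := RelabelAux.comp_pack hLipf hLipφ hrinv hνall hνbd
  obtain ⟨-, hrint2, hrii⟩ := RelabelAux.comp_pack hLipf hLipφ hrinv hrall hrbd
  have hyFTC' : ∀ a b : ℝ, X.y (φ b) - X.y (φ a) = ∫ η in a..b, X.yξ (φ η) * deriv φ η := by
    intro a b
    rw [hyint2 a b]
    have h2 := hyFTC 0 (φ b)
    have h3 := hyFTC 0 (φ a)
    linarith
  have hUFTC' : ∀ a b : ℝ, X.U (φ b) - X.U (φ a) = ∫ η in a..b, X.Uξ (φ η) * deriv φ η := by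
    intro a b
    rw [hUint2 a b]
    have h2 := hUFTC 0 (φ b)
    have h3 := hUFTC 0 (φ a)
    linarith
  have hν1 : (∫ η in (0:ℝ)..1, X.ν (φ η) * deriv φ η) = h := by
    rw [hνint2 0 1]
    have h3 : φ 1 = φ 0 + 1 := by
      have h4 := hφadd 0
      rwa [zero_add] at h4
    have h2 := intervalIntegral.integral_add_adjacent_intervals (hνall 0 (φ 0)) (hνall (φ 0) (φ 1))
    have h4 := hνperiodic.intervalIntegral_add_eq (φ 0) 0
    rw [zero_add] at h4
    rw [h3] at h2 ⊢
    rw [hh]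
    linarith
  have hkey : ∀ᵐ η ∂(volume : Measure ℝ),
      X.yξ (φ η) * deriv φ η + X.ν (φ η) * deriv φ η = 1 + h := by
    filter_upwards [hE3] with η hη
    have h4 : fξ (φ η) = (1/(1+h)) * (X.yξ (φ η) + X.ν (φ η)) := rfl
    have h3 : (1+h) * (fξ (φ η) * deriv φ η) = 1 + h := by rw [hη, mul_one]
    rw [h4] at h3
    field_simp at h3
    linarith
  refine ⟨⟨f, φ, fξ⟩, ⟨hlinv, hrinv, hfadd, ⟨KR.toNNReal, hLipf⟩, ⟨(1/κ).toNNReal, hLipφ⟩,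
    hfFTC⟩, fun ξ => rfl, ?_, ?_⟩
  · -- InF (act X g.inverse)
    refine ⟨⟨?_, ?_, ?_, ?_, ?_, ?_, ?_, ?_, ?_, ?_, ?_, ?_, ?_, ?_⟩, ?_, ?_, ?_, ?_, ?_⟩
    · exact hycont.comp hLipφ.continuous
    · exact hUcont.comp hLipφ.continuous
    · intro ξ; show X.y (φ (ξ+1)) = X.y (φ ξ) + 1
      rw [hφadd, hyper]
    · intro ξ; show X.U (φ (ξ+1)) = X.U (φ ξ)
      rw [hφadd, hUper]
    · intro ξ; show X.ν (φ (ξ+1)) * deriv φ (ξ+1) = X.ν (φ ξ) * deriv φ ξ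
      rw [hφadd, hνper, hDper]
    · intro ξ; show X.r (φ (ξ+1)) * deriv φ (ξ+1) = X.r (φ ξ) * deriv φ ξ
      rw [hφadd, hrper, hDper]
    · intro ξ; show X.yξ (φ (ξ+1)) * deriv φ (ξ+1) = X.yξ (φ ξ) * deriv φ ξ
      rw [hφadd, hyξper, hDper]
    · intro ξ; show X.Uξ (φ (ξ+1)) * deriv φ (ξ+1) = X.Uξ (φ ξ) * deriv φ ξ
      rw [hφadd, hUξper, hDper]
    · exact hyFTC'
    · exact hUFTC'
    · exact hyii 0 1
    · exact hUii 0 1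
    · exact hνii 0 1
    · exact hrii 0 1
    · -- bound
      refine ⟨C1 * (1/κ), ?_⟩
      filter_upwards [pull hC1] with η hη
      have hD' : |deriv φ η| ≤ 1/κ := hDle η
      have habs : ∀ z : ℝ, |z| ≤ C1 → |z * deriv φ η| ≤ C1 * (1/κ) := fun z hz => by
        rw [abs_mul]
        exact mul_le_mul hz hD' (abs_nonneg _) hC10
      exact ⟨habs _ hη.1, habs _ hη.2.1, habs _ hη.2.2.1, habs _ hη.2.2.2⟩
    · filter_upwards [pull hyξ0] with η h1
      exact mul_nonneg h1 (hD0 η)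
    · filter_upwards [pull hν0] with η h1
      exact mul_nonneg h1 (hD0 η)
    · refine ⟨1 + h, h1p, ?_⟩
      filter_upwards [hkey] with η hη
      show 1 + h ≤ X.yξ (φ η) * deriv φ η + X.ν (φ η) * deriv φ η
      linarith
    · filter_upwards [pull hconstr] with η h1
      show X.yξ (φ η) * deriv φ η * (X.ν (φ η) * deriv φ η)
          = (X.yξ (φ η) * deriv φ η)^2 * (X.U (φ η))^2
            + (X.Uξ (φ η) * deriv φ η)^2 + (X.r (φ η) * deriv φ η)^2
      linear_combination (deriv φ η)^2 * h1
  · -- the F0 identity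
    filter_upwards [hkey] with η hη
    show X.yξ (φ η) * deriv φ η + X.ν (φ η) * deriv φ η
      = 1 + ∫ η in (0:ℝ)..1, X.ν (φ η) * deriv φ η
    rw [hν1]
    exact hη
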